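/- Let T be a bounded linear operator on a complex Hilbert space H. Then (1/4)‖T*T + TT*‖ ≤ w(T)², where w denotes the numerical radius. -/

import Mathlib

/-- The numerical radius of a bounded linear operator. -/
noncomputable def numRadius {E : Type*} [NormedAddCommGroup E] [InnerProductSpace ℂ E]
    (T : E →L[ℂ] E) : ℝ :=
  ⨆ x : {x : E // ‖x‖ = 1}, ‖(inner ℂ (T x.val) x.val : ℂ)‖

private lemma norm_conj' (z : ℂ) : ‖(starRingEnd ℂ) z‖ = ‖z‖ :=
  RCLike.norm_conj z

private lemma abs_re_le_norm' (z : ℂ) : |z.re| ≤ ‖z‖ := by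
  exact Complex.abs_re_le_norm z

/-- A symmetric operator whose quadratic form is bounded by `c * ‖x‖ ^ 2` has norm at most
`c`. -/
lemma aux_norm_le_of_symmetric {E : Type*} [NormedAddCommGroup E] [InnerProductSpace ℂ E]
    (A : E →L[ℂ] E) (hsym : ∀ x y : E, (inner ℂ (A x) y : ℂ) = inner ℂ x (A y))
    {c : ℝ} (hc0 : 0 ≤ c) (hc : ∀ x : E, ‖(inner ℂ (A x) x : ℂ)‖ ≤ c * ‖x‖ ^ 2) :
    ‖A‖ ≤ c := by
  refine A.opNorm_le_bound hc0 fun x => ?_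
  by_cases hAx : A x = 0
  · rw [hAx, norm_zero]
    positivity
  have hx : x ≠ 0 := fun h => hAx (by simp [h])
  have hnx : (0 : ℝ) < ‖x‖ := norm_pos_iff.mpr hx
  have hnAx : (0 : ℝ) < ‖A x‖ := norm_pos_iff.mpr hAx
  set y : E := ((‖x‖ / ‖A x‖ : ℝ) : ℂ) • A x with hy
  have hny : ‖y‖ = ‖x‖ := by
    rw [hy, norm_smul, Complex.norm_real, Real.norm_eq_abs,
      abs_of_pos (div_pos hnx hnAx), div_mul_cancel₀ _ hnAx.ne']
  have hip : (inner ℂ (A x) y : ℂ) = ((‖x‖ * ‖A x‖ : ℝ) : ℂ) := by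
    have hne : ((‖A x‖ : ℝ) : ℂ) ≠ 0 := by
      exact_mod_cast hnAx.ne'
    rw [hy, inner_smul_right, inner_self_eq_norm_sq_to_K]
    push_cast
    rw [sq]
    field_simp
    rfl
  have hconj : (inner ℂ (A y) x : ℂ) = starRingEnd ℂ (inner ℂ (A x) y) := by
    rw [hsym x y, inner_conj_symm]
  have h1 : (inner ℂ (A (x + y)) (x + y) : ℂ) - inner ℂ (A (x - y)) (x - y)
      = 2 * (inner ℂ (A x) y + inner ℂ (A y) x) := by
    simp only [map_add, map_sub, inner_add_left, inner_add_right, inner_sub_left,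
      inner_sub_right]
    ring
  have hre : 4 * (‖x‖ * ‖A x‖)
      = Complex.re (inner ℂ (A (x + y)) (x + y)) - Complex.re (inner ℂ (A (x - y)) (x - y)) := by
    have h := congrArg Complex.re h1
    simp only [Complex.sub_re] at h
    rw [h, hconj, hip]
    simp [Complex.add_re, Complex.conj_re, Complex.mul_re]
    ring
  have hb1 : Complex.re (inner ℂ (A (x + y)) (x + y) : ℂ) ≤ c * ‖x + y‖ ^ 2 :=
    le_trans (le_abs_self _) (le_trans (abs_re_le_norm' _) (hc _))
  have hb2 : -Complex.re (inner ℂ (A (x - y)) (x - y) : ℂ) ≤ c * ‖x - y‖ ^ 2 :=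
    le_trans (neg_le_abs _) (le_trans (abs_re_le_norm' _) (hc _))
  have hpar : ‖x + y‖ * ‖x + y‖ + ‖x - y‖ * ‖x - y‖ = 2 * (‖x‖ * ‖x‖ + ‖y‖ * ‖y‖) :=
    by simpa only [sq] using parallelogram_law_with_norm ℂ x y
  have e1 : ‖x + y‖ ^ 2 + ‖x - y‖ ^ 2 = 4 * ‖x‖ ^ 2 := by
    rw [hny] at hpar
    rw [pow_two, pow_two, pow_two]
    linarith
  have e2 : c * ‖x + y‖ ^ 2 + c * ‖x - y‖ ^ 2 = 4 * (c * ‖x‖ ^ 2) := by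
    rw [← mul_add, e1]
    ring
  have hkey : 4 * (‖x‖ * ‖A x‖) ≤ 4 * (c * ‖x‖ ^ 2) := by
    rw [hre]
    linarith
  nlinarith [hkey, hnx]

set_option maxHeartbeats 1000000 in
theorem stmt_4 {H : Type*} [NormedAddCommGroup H] [InnerProductSpace ℂ H] [CompleteSpace H]
    (T : H →L[ℂ] H) :
    (1 / 4 : ℝ) * ‖ContinuousLinearMap.adjoint T * T + T * ContinuousLinearMap.adjoint T‖ ≤
      numRadius T ^ 2 := by
  classical
  set S := ContinuousLinearMap.adjoint T with hS
  set M := numRadius T with hMdef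
  have hM0 : 0 ≤ M := Real.iSup_nonneg fun x => norm_nonneg _
  have hbdd : BddAbove (Set.range fun x : {x : H // ‖x‖ = 1} =>
      ‖(inner ℂ (T x.val) x.val : ℂ)‖) := by
    refine ⟨‖T‖, ?_⟩
    rintro _ ⟨x, rfl⟩
    calc ‖(inner ℂ (T x.val) x.val : ℂ)‖ ≤ ‖T x.val‖ * ‖x.val‖ := norm_inner_le_norm _ _
      _ ≤ ‖T‖ * ‖x.val‖ * ‖x.val‖ := by
          gcongr
          exact T.le_opNorm _
      _ = ‖T‖ := by rw [x.prop]; ring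
  have hunit : ∀ x : H, ‖x‖ = 1 → ‖(inner ℂ (T x) x : ℂ)‖ ≤ M := fun x hx =>
    le_ciSup hbdd (⟨x, hx⟩ : {x : H // ‖x‖ = 1})
  have hT : ∀ x : H, ‖(inner ℂ (T x) x : ℂ)‖ ≤ M * ‖x‖ ^ 2 := by
    intro x
    rcases eq_or_ne x 0 with rfl | hx
    · simp
    · have hn : (0 : ℝ) < ‖x‖ := norm_pos_iff.mpr hx
      have ha : ‖((‖x‖⁻¹ : ℝ) : ℂ)‖ = ‖x‖⁻¹ := by
        rw [Complex.norm_real, Real.norm_eq_abs, abs_of_pos (inv_pos.mpr hn)]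
      have hu : ‖((‖x‖⁻¹ : ℝ) : ℂ) • x‖ = 1 := by
        rw [norm_smul, ha, inv_mul_cancel₀ hn.ne']
      have h := hunit _ hu
      rw [map_smul, inner_smul_left, inner_smul_right, norm_mul, norm_mul, norm_conj',
        ha] at h
      calc ‖(inner ℂ (T x) x : ℂ)‖
          = ‖x‖ ^ 2 * (‖x‖⁻¹ * (‖x‖⁻¹ * ‖(inner ℂ (T x) x : ℂ)‖)) := by
            rw [sq]
            field_simp
        _ ≤ ‖x‖ ^ 2 * M := mul_le_mul_of_nonneg_left h (sq_nonneg _)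
        _ = M * ‖x‖ ^ 2 := mul_comm _ _
  have hSipp : ∀ x : H, ‖(inner ℂ (S x) x : ℂ)‖ ≤ M * ‖x‖ ^ 2 := by
    intro x
    have h : (inner ℂ (S x) x : ℂ) = starRingEnd ℂ (inner ℂ (T x) x) := by
      rw [hS, ContinuousLinearMap.adjoint_inner_left, inner_conj_symm]
    rw [h, norm_conj']
    exact hT x
  -- the real and imaginary parts of T
  set A : H →L[ℂ] H := (2⁻¹ : ℂ) • (T + S) with hA
  set B : H →L[ℂ] H := ((2⁻¹ : ℂ) * Complex.I) • (S - T) with hB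
  have hAstar : star A = A := by
    rw [hA, star_smul, star_add, ContinuousLinearMap.star_eq_adjoint,
      ContinuousLinearMap.star_eq_adjoint, hS, ContinuousLinearMap.adjoint_adjoint]
    rw [show (star (2⁻¹ : ℂ)) = (2⁻¹ : ℂ) by simp, add_comm]
  have hBstar : star B = B := by
    rw [hB, star_smul, star_sub, ContinuousLinearMap.star_eq_adjoint,
      ContinuousLinearMap.star_eq_adjoint, hS, ContinuousLinearMap.adjoint_adjoint]
    rw [show (star ((2⁻¹ : ℂ) * Complex.I)) = -((2⁻¹ : ℂ) * Complex.I) by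
        simp [Complex.star_def, Complex.conj_I],
      neg_smul, ← smul_neg, neg_sub]
  have hAsym : ∀ x y : H, (inner ℂ (A x) y : ℂ) = inner ℂ x (A y) := by
    intro x y
    conv_lhs => rw [← hAstar, ContinuousLinearMap.star_eq_adjoint,
      ContinuousLinearMap.adjoint_inner_left]
  have hBsym : ∀ x y : H, (inner ℂ (B x) y : ℂ) = inner ℂ x (B y) := by
    intro x y
    conv_lhs => rw [← hBstar, ContinuousLinearMap.star_eq_adjoint,
      ContinuousLinearMap.adjoint_inner_left]
  have hAq : ∀ x : H, ‖(inner ℂ (A x) x : ℂ)‖ ≤ M * ‖x‖ ^ 2 := by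
    intro x
    rw [hA]
    simp only [ContinuousLinearMap.smul_apply, ContinuousLinearMap.add_apply,
      inner_smul_left, inner_add_left]
    rw [norm_mul, norm_conj']
    have h2 : ‖(2⁻¹ : ℂ)‖ = 2⁻¹ := by norm_num
    rw [h2]
    calc (2⁻¹ : ℝ) * ‖(inner ℂ (T x) x : ℂ) + (inner ℂ (S x) x : ℂ)‖
        ≤ 2⁻¹ * (‖(inner ℂ (T x) x : ℂ)‖ + ‖(inner ℂ (S x) x : ℂ)‖) := by
          gcongr
          exact norm_add_le _ _
      _ ≤ 2⁻¹ * (M * ‖x‖ ^ 2 + M * ‖x‖ ^ 2) := by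
          gcongr
          · exact hT x
          · exact hSipp x
      _ = M * ‖x‖ ^ 2 := by ring
  have hBq : ∀ x : H, ‖(inner ℂ (B x) x : ℂ)‖ ≤ M * ‖x‖ ^ 2 := by
    intro x
    rw [hB]
    simp only [ContinuousLinearMap.smul_apply, ContinuousLinearMap.sub_apply,
      inner_smul_left, inner_sub_left]
    rw [norm_mul, norm_conj']
    have h2 : ‖(2⁻¹ : ℂ) * Complex.I‖ = 2⁻¹ := by
      rw [norm_mul, Complex.norm_I]
      norm_num
    rw [h2]
    calc (2⁻¹ : ℝ) * ‖(inner ℂ (S x) x : ℂ) - (inner ℂ (T x) x : ℂ)‖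
        ≤ 2⁻¹ * (‖(inner ℂ (S x) x : ℂ)‖ + ‖(inner ℂ (T x) x : ℂ)‖) := by
          gcongr
          exact norm_sub_le _ _
      _ ≤ 2⁻¹ * (M * ‖x‖ ^ 2 + M * ‖x‖ ^ 2) := by
          gcongr
          · exact hSipp x
          · exact hT x
      _ = M * ‖x‖ ^ 2 := by ring
  have hAn : ‖A‖ ≤ M := aux_norm_le_of_symmetric A hAsym hM0 hAq
  have hBn : ‖B‖ ≤ M := aux_norm_le_of_symmetric B hBsym hM0 hBq
  -- algebraic identity
  have hkey : S * T + T * S = (2 : ℂ) • (A * A + B * B) := by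
    rw [hA, hB]
    rw [smul_mul_smul_comm, smul_mul_smul_comm]
    have hc1 : (2⁻¹ : ℂ) * 2⁻¹ = 4⁻¹ := by norm_num
    have hc2 : ((2⁻¹ : ℂ) * Complex.I) * ((2⁻¹ : ℂ) * Complex.I) = -(4⁻¹) := by
      rw [mul_mul_mul_comm, Complex.I_mul_I]
      norm_num
    rw [hc1, hc2]
    simp only [add_mul, mul_add, sub_mul, mul_sub]
    module
  have hAA : ‖A * A‖ = ‖A‖ * ‖A‖ := by
    have h := CStarRing.norm_star_mul_self (x := A)
    rw [hAstar] at h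
    exact h
  have hBB : ‖B * B‖ = ‖B‖ * ‖B‖ := by
    have h := CStarRing.norm_star_mul_self (x := B)
    rw [hBstar] at h
    exact h
  have hnorm : ‖S * T + T * S‖ ≤ 4 * M ^ 2 := by
    rw [hkey]
    calc ‖(2 : ℂ) • (A * A + B * B)‖ = 2 * ‖A * A + B * B‖ := by
          rw [norm_smul]; norm_num
      _ ≤ 2 * (‖A * A‖ + ‖B * B‖) := by gcongr; exact norm_add_le _ _
      _ = 2 * (‖A‖ * ‖A‖ + ‖B‖ * ‖B‖) := by rw [hAA, hBB]
      _ ≤ 2 * (M * M + M * M) := by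
          nlinarith [hAn, hBn, norm_nonneg A, norm_nonneg B, hM0]
      _ = 4 * M ^ 2 := by ring
  calc (1 / 4 : ℝ) * ‖S * T + T * S‖ ≤ (1 / 4 : ℝ) * (4 * M ^ 2) := by
        gcongr
    _ = M ^ 2 := by ring
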